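/- Let d ≥ 1 and define the Shapley kernel weights μ_i = (d−1)/(C(d,i)·i·(d−i)) for 1 ≤ i ≤ d−1 and μ_d = 0. Define μ̄_p = Σ_{i=p}^{d−1} C(d−p, i−p)·μ_i for 1 ≤ p ≤ d−1. Then μ̄_p − μ̄_{p+1} = (d−1)/(d·p) for all 1 ≤ p ≤ d−1 (with μ̄_d = 0). -/

import Mathlib

lemma auxA (j k : ℕ) :
    (j+k+2).choose (j+1) * (j+1) * (k+1) = (j+k+2) * (j+k+1) * ((j+k).choose j) := by
  have h1 := Nat.add_one_mul_choose_eq (j+k+1) j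
  have h2 := Nat.choose_mul_succ_eq (j+k) j
  have h3 : j + k + 1 - j = k + 1 := by omega
  rw [h3] at h2
  calc (j+k+2).choose (j+1) * (j+1) * (k+1) = ((j+k+1+1) * (j+k+1).choose j) * (k+1) := by
        rw [h1]
    _ = (j+k+2) * ((j+k+1).choose j * (k+1)) := by ring
    _ = (j+k+2) * ((j+k).choose j * (j+k+1)) := by rw [← h2]
    _ = (j+k+2) * (j+k+1) * ((j+k).choose j) := by ring

/-- `C(d,i)·i·(d−i) = d·(d−1)·C(d−2,i−1)` for `1 ≤ i ≤ d−1`. -/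
lemma auxA' (d i : ℕ) (hd : 2 ≤ d) (hi : 1 ≤ i) (hid : i ≤ d - 1) :
    d.choose i * i * (d - i) = d * (d-1) * ((d-2).choose (i-1)) := by
  obtain ⟨j, rfl⟩ : ∃ j, i = j + 1 := ⟨i - 1, by omega⟩
  obtain ⟨k, rfl⟩ : ∃ k, d = j + k + 2 := ⟨d - j - 2, by omega⟩
  have e1 : j + k + 2 - (j+1) = k + 1 := by omega
  have e2 : j + k + 2 - 1 = j + k + 1 := by omega
  have e3 : j + k + 2 - 2 = j + k := by omega
  have e4 : j + 1 - 1 = j := by omega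
  rw [e1, e2, e3, e4]
  exact auxA j k

/-- trinomial revision in the needed form. -/
lemma auxB (d p i : ℕ) (hp : 1 ≤ p) (hpi : p ≤ i) (hid : i ≤ d - 1) (hd : 2 ≤ d) :
    (d-2).choose (i-1) * (i-1).choose (p-1) = (d-2).choose (p-1) * ((d-p-1).choose (i-p)) := by
  have h := Nat.choose_mul (n := d-2) (k := i-1) (s := p-1) (by omega)
  have e1 : d - 2 - (p-1) = d - p - 1 := by omega
  have e2 : i - 1 - (p-1) = i - p := by omega
  rwa [e1, e2] at h

/-- for the Shapley kernel weights, `μ̄_p − μ̄_{p+1} = (d−1)/(d·p)`. -/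
theorem shapley_kernel_cumulative_difference (d : ℕ) (hd : 2 ≤ d)
    (μ μbar : ℕ → ℝ)
    (hμ : ∀ i, 1 ≤ i → i ≤ d - 1 →
      μ i = ((d : ℝ) - 1) / ((d.choose i : ℝ) * (i : ℝ) * ((d : ℝ) - (i : ℝ))))
    (hμd : μ d = 0)
    (hbar : ∀ p, 1 ≤ p → p ≤ d →
      μbar p = ∑ i ∈ Finset.Icc p d, ((d - p).choose (i - p) : ℝ) * μ i) :
    ∀ p, 1 ≤ p → p ≤ d - 1 →
      μbar p - μbar (p + 1) = ((d : ℝ) - 1) / ((d : ℝ) * (p : ℝ)) := by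
  intro p hp hple
  have hpd : p ≤ d := by omega
  rw [hbar p hp hpd, hbar (p+1) (by omega) (by omega)]
  have hins : Finset.Icc p d = insert p (Finset.Icc (p+1) d) := by
    ext x; simp [Finset.mem_Icc]; omega
  have hnot : p ∉ Finset.Icc (p+1) d := by simp
  have key : (∑ i ∈ Finset.Icc p d, ((d - p).choose (i - p) : ℝ) * μ i)
      - ∑ i ∈ Finset.Icc (p+1) d, ((d - (p+1)).choose (i - (p+1)) : ℝ) * μ i
      = ∑ i ∈ Finset.Icc p d, ((d - p - 1).choose (i - p) : ℝ) * μ i := by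
    rw [hins, Finset.sum_insert hnot, Finset.sum_insert hnot]
    have h0 : ((d - p).choose (p - p) : ℝ) = 1 := by simp
    have h0' : ((d - p - 1).choose (p - p) : ℝ) = 1 := by simp
    rw [h0, h0', add_sub_assoc, ← Finset.sum_sub_distrib]
    have hterm : ∀ i ∈ Finset.Icc (p+1) d,
        ((d - p).choose (i - p) : ℝ) * μ i - ((d - (p+1)).choose (i - (p+1)) : ℝ) * μ i
        = ((d - p - 1).choose (i - p) : ℝ) * μ i := by
      intro i hi
      simp only [Finset.mem_Icc] at hi
      have pascal : (d - p).choose (i - p)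
          = (d - p - 1).choose (i - p - 1) + (d - p - 1).choose (i - p) := by
        obtain ⟨a, ha⟩ : ∃ a, d - p = a + 1 := ⟨d - p - 1, by omega⟩
        obtain ⟨b, hb⟩ : ∃ b, i - p = b + 1 := ⟨i - p - 1, by omega⟩
        rw [ha, hb, Nat.choose_succ_succ]
        simp [Nat.succ_eq_add_one]
      have e3 : i - (p+1) = i - p - 1 := by omega
      have e4 : d - (p+1) = d - p - 1 := by omega
      rw [e3, e4, pascal]
      push_cast
      ring
    rw [Finset.sum_congr rfl hterm]
  rw [key]
  have hins2 : Finset.Icc p d = insert d (Finset.Icc p (d-1)) := by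
    ext x; simp [Finset.mem_Icc]; omega
  have hnot2 : d ∉ Finset.Icc p (d-1) := by
    simp only [Finset.mem_Icc]; omega
  rw [hins2, Finset.sum_insert hnot2, hμd, mul_zero, zero_add]
  have hCdp : ((d-2).choose (p-1) : ℝ) ≠ 0 := by
    exact Nat.cast_ne_zero.mpr (Nat.choose_pos (by omega)).ne'
  have hd0 : (d : ℝ) ≠ 0 := by exact_mod_cast (by omega : d ≠ 0)
  have hp0 : (p : ℝ) ≠ 0 := by exact_mod_cast (by omega : p ≠ 0)
  have step2 : ∀ i ∈ Finset.Icc p (d-1),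
      ((d - p - 1).choose (i - p) : ℝ) * μ i
      = ((i-1).choose (p-1) : ℝ) * (((d:ℝ) * ((d-2).choose (p-1) : ℝ))⁻¹) := by
    intro i hi
    simp only [Finset.mem_Icc] at hi
    rw [hμ i (by omega) hi.2]
    have hC : ((d.choose i : ℝ)) ≠ 0 := by
      exact Nat.cast_ne_zero.mpr (Nat.choose_pos (by omega)).ne'
    have hi0 : (i : ℝ) ≠ 0 := by exact_mod_cast (by omega : i ≠ 0)
    have hdi : (d : ℝ) - (i : ℝ) ≠ 0 := by
      have : (i : ℝ) < (d : ℝ) := by exact_mod_cast (by omega : i < d)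
      linarith
    have hnat : (d-p-1).choose (i-p) * ((d-1) * (d * (d-2).choose (p-1)))
        = (i-1).choose (p-1) * (d.choose i * i * (d-i)) := by
      calc (d-p-1).choose (i-p) * ((d-1) * (d * (d-2).choose (p-1)))
          = d * (d-1) * ((d-2).choose (p-1) * ((d-p-1).choose (i-p))) := by ring
        _ = d * (d-1) * ((d-2).choose (i-1) * (i-1).choose (p-1)) := by
            rw [auxB d p i hp hi.1 hi.2 hd]
        _ = (i-1).choose (p-1) * (d * (d-1) * ((d-2).choose (i-1))) := by ring
        _ = (i-1).choose (p-1) * (d.choose i * i * (d-i)) := by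
            rw [auxA' d i hd (by omega) hi.2]
    have hr : ((d-p-1).choose (i-p) : ℝ) * (((d:ℝ)-1) * ((d:ℝ) * ((d-2).choose (p-1):ℝ)))
        = ((i-1).choose (p-1):ℝ) * ((d.choose i:ℝ) * (i:ℝ) * ((d:ℝ) - (i:ℝ))) := by
      have c1 : ((d:ℝ)-1) = ((d-1:ℕ):ℝ) := by
        rw [Nat.cast_sub (by omega)]; norm_num
      have c2 : ((d:ℝ)-(i:ℝ)) = ((d-i:ℕ):ℝ) := by
        rw [Nat.cast_sub (by omega)]
      rw [c1, c2]
      exact_mod_cast hnat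
    field_simp
    linear_combination hr
  rw [Finset.sum_congr rfl step2, ← Finset.sum_mul]
  have hsum : ∑ i ∈ Finset.Icc p (d-1), ((i-1).choose (p-1) : ℝ)
      = ((d-1).choose p : ℝ) := by
    have hmap : Finset.Icc p (d-1)
        = Finset.map (addRightEmbedding 1) (Finset.Icc (p-1) (d-2)) := by
      rw [Finset.map_add_right_Icc]
      congr 1 <;> omega
    have hn : ∑ i ∈ Finset.Icc p (d-1), (i-1).choose (p-1) = (d-1).choose p := by
      rw [hmap, Finset.sum_map]
      simp only [addRightEmbedding_apply, Nat.add_sub_cancel]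
      rw [Nat.sum_Icc_choose]
      congr 1 <;> omega
    exact_mod_cast hn
  rw [hsum]
  have hfin : (d-1) * (d-2).choose (p-1) = (d-1).choose p * p := by
    have h := Nat.add_one_mul_choose_eq (d-2) (p-1)
    have e1 : d - 2 + 1 = d - 1 := by omega
    have e2 : p - 1 + 1 = p := by omega
    rwa [e1, e2] at h
  have hfinR : ((d:ℝ)-1) * ((d-2).choose (p-1) : ℝ) = ((d-1).choose p : ℝ) * (p:ℝ) := by
    have c1 : ((d:ℝ)-1) = ((d-1:ℕ):ℝ) := by rw [Nat.cast_sub (by omega)]; norm_num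
    rw [c1]; exact_mod_cast hfin
  field_simp
  linear_combination (-1:ℝ) * hfinR
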